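/- arXiv:0812.0802 — 2 statements merged into one kernel-verified Lean document; each statement's English description precedes it below -/
import Mathlib

section
/- Let A be a commutative domain of characteristic zero and ∂ a locally nilpotent derivation on A. Then ker ∂ is factorially closed in A: if a·b ∈ ker ∂ with a, b nonzero, then a ∈ ker ∂ and b ∈ ker ∂. -/
/-- A derivation is locally nilpotent if every element is annihilated by some iterate. -/
def IsLND {R A : Type*} [CommRing R] [CommRing A] [Algebra R A]
    (D : Derivation R A A) : Prop :=
  ∀ a : A, ∃ n : ℕ, (⇑D)^[n] a = 0

lemma iterate_zero' {R A : Type*} [CommRing R] [CommRing A] [Algebra R A]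
    (D : Derivation R A A) (n : ℕ) : (⇑D)^[n] 0 = 0 := by
  induction n with
  | zero => rfl
  | succ n ih => rw [Function.iterate_succ_apply, map_zero, ih]

lemma iterate_leibniz {R A : Type*} [CommRing R] [CommRing A] [Algebra R A]
    (D : Derivation R A A) (a b : A) (n : ℕ) :
    (⇑D)^[n] (a * b) =
      ∑ i ∈ Finset.range (n + 1), n.choose i • ((⇑D)^[i] a * (⇑D)^[n - i] b) := by
  induction n with
  | zero => simp
  | succ n ih =>
    rw [Function.iterate_succ_apply', ih, map_sum]
    have key : ∀ i ∈ Finset.range (n + 1),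
        D (n.choose i • ((⇑D)^[i] a * (⇑D)^[n - i] b)) =
        n.choose i • ((⇑D)^[i+1] a * (⇑D)^[n - i] b)
          + n.choose i • ((⇑D)^[i] a * (⇑D)^[n - i + 1] b) := by
      intro i hi
      rw [map_nsmul, Derivation.leibniz]
      simp only [smul_eq_mul, Function.iterate_succ_apply', nsmul_eq_mul]
      ring
    rw [Finset.sum_congr rfl key, Finset.sum_add_distrib]
    set g : ℕ → A := fun i => (⇑D)^[i] a * (⇑D)^[n + 1 - i] b with hg
    have h1 : ∀ i ∈ Finset.range (n + 1),
        n.choose i • ((⇑D)^[i+1] a * (⇑D)^[n - i] b) = n.choose i • g (i + 1) := by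
      intro i hi
      simp only [hg]
      congr 3
      omega
    have h2 : ∀ i ∈ Finset.range (n + 1),
        n.choose i • ((⇑D)^[i] a * (⇑D)^[n - i + 1] b) = n.choose i • g i := by
      intro i hi
      simp only [hg, Finset.mem_range] at hi ⊢
      congr 3
      omega
    rw [Finset.sum_congr rfl h1, Finset.sum_congr rfl h2]
    rw [Finset.sum_range_succ' (fun i => (n+1).choose i • g i) (n+1)]
    have hch : ∀ i, (n+1).choose (i+1) = n.choose i + n.choose (i+1) :=
      fun i => Nat.choose_succ_succ n i
    simp only [hch, add_smul, Finset.sum_add_distrib, Nat.choose_zero_right, one_smul]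
    have h3 : ∑ i ∈ Finset.range (n + 1), n.choose (i+1) • g (i+1)
        = ∑ i ∈ Finset.range (n + 1), n.choose i • g i - g 0 := by
      rw [Finset.sum_range_succ (fun i => n.choose (i+1) • g (i+1)) n]
      rw [Finset.sum_range_succ' (fun i => n.choose i • g i) n]
      simp [Nat.choose_succ_self]
    rw [h3]
    ring

lemma iterate_stable {R A : Type*} [CommRing R] [CommRing A] [Algebra R A]
    (D : Derivation R A A) (a : A) {k j : ℕ} (hk : (⇑D)^[k] a = 0) (hkj : k ≤ j) :
    (⇑D)^[j] a = 0 := by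
  obtain ⟨c, rfl⟩ := Nat.exists_eq_add_of_le hkj
  rw [Nat.add_comm, Function.iterate_add_apply, hk, iterate_zero']

/-- The kernel of a locally nilpotent derivation on a domain of characteristic zero is
factorially closed. -/
theorem stmt0 {A : Type*} [CommRing A] [IsDomain A] [Algebra ℚ A]
    (D : Derivation ℚ A A) (hD : IsLND D)
    (a b : A) (ha : a ≠ 0) (hb : b ≠ 0) (hab : D (a * b) = 0) :
    D a = 0 ∧ D b = 0 := by
  have : CharZero A := charZero_of_injective_algebraMap (algebraMap ℚ A).injective
  -- minimal nilpotency indices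
  obtain ⟨m, hm1, hm2⟩ : ∃ m : ℕ, (⇑D)^[m] a ≠ 0 ∧ (⇑D)^[m+1] a = 0 := by
    have h := hD a
    classical
    have hN := Nat.find_spec h
    have hN1 : Nat.find h ≠ 0 := by
      intro h0
      rw [h0] at hN
      exact ha hN
    refine ⟨Nat.find h - 1, ?_, ?_⟩
    · exact Nat.find_min h (by omega)
    · have : Nat.find h - 1 + 1 = Nat.find h := by omega
      rw [this]; exact hN
  obtain ⟨n, hn1, hn2⟩ : ∃ n : ℕ, (⇑D)^[n] b ≠ 0 ∧ (⇑D)^[n+1] b = 0 := by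
    have h := hD b
    classical
    have hN := Nat.find_spec h
    have hN1 : Nat.find h ≠ 0 := by
      intro h0
      rw [h0] at hN
      exact hb hN
    refine ⟨Nat.find h - 1, ?_, ?_⟩
    · exact Nat.find_min h (by omega)
    · have : Nat.find h - 1 + 1 = Nat.find h := by omega
      rw [this]; exact hN
  rcases Nat.eq_zero_or_pos (m + n) with hmn | hmn
  · have hm0 : m = 0 := by omega
    have hn0 : n = 0 := by omega
    subst hm0; subst hn0
    exact ⟨hm2, hn2⟩
  · exfalso
    have hzero : (⇑D)^[m + n] (a * b) = 0 := by
      obtain ⟨k, hk⟩ : ∃ k, m + n = k + 1 := ⟨m + n - 1, by omega⟩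
      rw [hk, Function.iterate_succ_apply, hab, iterate_zero']
    rw [iterate_leibniz] at hzero
    have hsingle : ∑ i ∈ Finset.range (m + n + 1),
        (m + n).choose i • ((⇑D)^[i] a * (⇑D)^[m + n - i] b)
        = (m + n).choose m • ((⇑D)^[m] a * (⇑D)^[n] b) := by
      rw [Finset.sum_eq_single m]
      · have hmn' : m + n - m = n := by omega
        rw [hmn']
      · intro i hi hne
        rcases Nat.lt_or_ge i m with h | h
        · have : (⇑D)^[m + n - i] b = 0 :=
            iterate_stable D b hn2 (by omega)
          rw [this, mul_zero, smul_zero]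
        · have him : m + 1 ≤ i := by omega
          have : (⇑D)^[i] a = 0 := iterate_stable D a hm2 him
          rw [this, zero_mul, smul_zero]
      · intro h
        exact absurd (Finset.mem_range.mpr (by omega)) h
    rw [hsingle] at hzero
    have hne : (m + n).choose m • ((⇑D)^[m] a * (⇑D)^[n] b) ≠ 0 := by
      rw [nsmul_eq_mul]
      refine mul_ne_zero ?_ (mul_ne_zero hm1 hn1)
      exact_mod_cast Nat.cast_ne_zero.mpr (Nat.choose_pos (by omega : m ≤ m + n)).ne'
    exact hne hzero
end

section
/- Let A be a commutative domain of characteristic zero and ∂ a locally nilpotent derivation on A. For a ∈ A, if ∂(a) belongs to the principal ideal (a), then ∂(a) = 0. -/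
section Aux

variable {A : Type*} [CommRing A] [IsDomain A] [Algebra ℚ A] (D : Derivation ℚ A A)

omit [IsDomain A] in
lemma iter_zero (x : A) (n : ℕ) (hn : (⇑D)^[n] x = 0) (k : ℕ) (hk : n ≤ k) :
    (⇑D)^[k] x = 0 := by
  obtain ⟨m, rfl⟩ := Nat.exists_eq_add_of_le hk
  rw [Nat.add_comm, Function.iterate_add_apply, hn, iterate_map_zero]

omit [IsDomain A] in
lemma key (k : ℕ) : ∀ m n : ℕ, m + n = k → ∀ x y : A,
    (⇑D)^[m + 1] x = 0 → (⇑D)^[n + 1] y = 0 →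
    (⇑D)^[m + n] (x * y) = ((m + n).choose m : A) * ((⇑D)^[m] x * (⇑D)^[n] y) := by
  induction k with
  | zero =>
    rintro m n hmn x y hx hy
    obtain ⟨rfl, rfl⟩ : m = 0 ∧ n = 0 := by omega
    simp
  | succ k ih =>
    rintro m n hmn x y hx hy
    have hDxy : (⇑D)^[m + n] (x * y) = (⇑D)^[k] (x * D y) + (⇑D)^[k] (D x * y) := by
      rw [hmn, Function.iterate_succ_apply, D.leibniz, smul_eq_mul, smul_eq_mul,
        mul_comm y (D x), iterate_map_add]
    rcases m with _ | p
    · obtain rfl : n = k + 1 := by omega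
      have hDx : D x = 0 := by simpa using hx
      have h1 : (⇑D)^[k] (D x * y) = 0 := by rw [hDx, zero_mul, iterate_map_zero]
      have h2 := ih 0 k (by omega) x (D y) hx
        (by rw [← Function.iterate_succ_apply]; exact hy)
      rw [← Function.iterate_succ_apply] at h2
      rw [hDxy, h1, add_zero]
      simpa using h2
    · rcases n with _ | q
      · obtain rfl : k = p := by omega
        have hDy : D y = 0 := by simpa using hy
        have h1 : (⇑D)^[k] (x * D y) = 0 := by rw [hDy, mul_zero, iterate_map_zero]
        have h2 := ih k 0 (by omega) (D x) y
          (by rw [← Function.iterate_succ_apply]; exact hx) hy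
        rw [← Function.iterate_succ_apply] at h2
        rw [hDxy, h1, zero_add]
        simpa using h2
      · obtain rfl : k = p + q + 1 := by omega
        have h1 := ih (p + 1) q (by omega) x (D y) hx
          (by rw [← Function.iterate_succ_apply]; exact hy)
        have h2 := ih p (q + 1) (by omega) (D x) y
          (by rw [← Function.iterate_succ_apply]; exact hx) hy
        rw [← Function.iterate_succ_apply] at h1 h2
        rw [Nat.add_right_comm p 1 q] at h1
        rw [show p + (q + 1) = p + q + 1 from by omega] at h2
        rw [hDxy, h1, h2]
        have hc : (((p + 1) + (q + 1)).choose (p + 1) : A)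
            = ((p + q + 1).choose p : A) + ((p + q + 1).choose (p + 1) : A) := by
          rw [← Nat.cast_add]
          congr 1
          rw [show (p + 1) + (q + 1) = (p + q + 1) + 1 from by omega,
            Nat.choose_succ_succ]
        rw [hc]
        ring

omit [IsDomain A] in
lemma nu_exists (hD : IsLND D) (x : A) (hx : x ≠ 0) :
    ∃ n : ℕ, (⇑D)^[n] x ≠ 0 ∧ (⇑D)^[n + 1] x = 0 := by
  classical
  obtain ⟨N, hN⟩ := hD x
  have hex : ∃ n, (⇑D)^[n] x = 0 := ⟨N, hN⟩
  have hn0 : Nat.find hex ≠ 0 := by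
    intro h
    have := Nat.find_spec hex
    rw [h] at this
    exact hx (by simpa using this)
  obtain ⟨m, hm⟩ := Nat.exists_eq_succ_of_ne_zero hn0
  refine ⟨m, Nat.find_min hex (by omega), ?_⟩
  rw [show m + 1 = Nat.find hex from hm.symm]
  exact Nat.find_spec hex

end Aux

/-- For a locally nilpotent derivation `D` on a domain of characteristic zero,
if `D a` lies in the principal ideal `(a)` then `D a = 0`. -/
theorem stmt2 {A : Type*} [CommRing A] [IsDomain A] [Algebra ℚ A]
    (D : Derivation ℚ A A) (hD : IsLND D) (a : A)
    (h : D a ∈ Ideal.span ({a} : Set A)) :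
    D a = 0 := by
  by_contra hne
  obtain ⟨c, hc⟩ := Ideal.mem_span_singleton'.mp h
  have ha : a ≠ 0 := by rintro rfl; exact hne (by simpa using hc.symm)
  have hc0 : c ≠ 0 := by rintro rfl; exact hne (by simpa using hc.symm)
  obtain ⟨m, hm1, hm2⟩ := nu_exists D hD c hc0
  obtain ⟨n, hn1, hn2⟩ := nu_exists D hD a ha
  have hkey := key D (m + n) m n rfl c a hm2 hn2
  rw [hc] at hkey
  have hiter : (⇑D)^[m + n] (D a) = (⇑D)^[m + n + 1] a :=
    (Function.iterate_succ_apply (⇑D) (m + n) a).symm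
  have hz : (⇑D)^[m + n + 1] a = 0 :=
    iter_zero D a (n + 1) hn2 (m + n + 1) (by omega)
  rw [hiter, hz] at hkey
  have hchar : CharZero A :=
    charZero_of_injective_algebraMap (algebraMap ℚ A).injective
  have hcne : ((m + n).choose m : A) ≠ 0 :=
    Nat.cast_ne_zero.mpr (Nat.choose_pos (by omega)).ne'
  rcases mul_eq_zero.mp hkey.symm with h' | h'
  · exact hcne h'
  · exact absurd h' (mul_ne_zero hm1 hn1)
end
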